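/- Let f : [0,1] → ℝ. (1) If the symmetrization 𝓕 of f is concave on [0,1] and f(0) ≥ f(1/2), then L_n(f) is decreasing in n and R_n(f) is increasing in n. (2) If 𝓕 is concave on [0,1] and f(1) ≥ f(1/2), then L_n(f) is increasing in n and R_n(f) is decreasing in n. (3) If 𝓕 is convex on [0,1] and f(1) ≤ f(1/2), then L_n(f) is decreasing in n and R_n(f) is increasing in n. (4) If 𝓕 is convex on [0,1] and f(0) ≤ f(1/2), then L_n(f) is increasing in n and R_n(f) is decreasing in n. -/

import Mathlib

open Finset

/-- Left Riemann sum of `f` over the uniform partition of `[0,1]` into `n` parts. -/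
noncomputable def riemannL (f : ℝ → ℝ) (n : ℕ) : ℝ :=
  (1 / (n : ℝ)) * ∑ k ∈ Finset.range n, f ((k : ℝ) / (n : ℝ))

/-- Right Riemann sum of `f` over the uniform partition of `[0,1]` into `n` parts. -/
noncomputable def riemannR (f : ℝ → ℝ) (n : ℕ) : ℝ :=
  (1 / (n : ℝ)) * ∑ k ∈ Finset.Icc 1 n, f ((k : ℝ) / (n : ℝ))

/-- Symmetrization of `f` with respect to `x = 1/2`. -/
noncomputable def symmetrization (f : ℝ → ℝ) : ℝ → ℝ :=
  fun x => (f x + f (1 - x)) / 2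

/-- closed form for sum of min(k*q, m) -/
lemma sum_min_closed (q K m : ℕ) (hq : 1 ≤ q) (hA : m / q ≤ K) :
    2 * ∑ k ∈ range (K+1), min (k*q) m
      = q * (m/q) * (m/q + 1) + 2 * (K - m/q) * m := by
  set a := m / q with ha
  have haq : a * q ≤ m := Nat.div_mul_le_self m q
  have hlt : m < (a+1) * q := by
    have e2 : q * a + m % q = m := Nat.div_add_mod m q
    have e3 : a * q = q * a := Nat.mul_comm a q
    have e4 : (a+1) * q = a * q + q := by ring
    have e5 : m % q < q := Nat.mod_lt m hq
    omega
  have hsplit : range (K+1) = range (a+1) ∪ Ico (a+1) (K+1) := by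
    rw [range_eq_Ico, ← Finset.Ico_union_Ico_eq_Ico (Nat.zero_le (a+1)) (Nat.succ_le_succ hA), range_eq_Ico]
  have hdisj : Disjoint (range (a+1)) (Ico (a+1) (K+1)) := by
    simp [Finset.disjoint_left]
    intro x hx; omega
  rw [hsplit, Finset.sum_union hdisj]
  have h1 : ∑ k ∈ range (a+1), min (k*q) m = ∑ k ∈ range (a+1), k*q := by
    apply Finset.sum_congr rfl
    intro k hk
    simp only [Finset.mem_range] at hk
    have : k * q ≤ m := le_trans (Nat.mul_le_mul_right q (by omega)) haq
    omega
  have h2 : ∑ k ∈ Ico (a+1) (K+1), min (k*q) m = (K - a) * m := by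
    rw [Finset.sum_congr rfl (fun k hk => ?_), Finset.sum_const, Nat.card_Ico]
    · congr 1; omega
    · simp only [Finset.mem_Ico] at hk
      have : m ≤ k * q := le_trans (le_of_lt hlt) (Nat.mul_le_mul_right q (by omega))
      omega
  rw [h1, h2]
  have h3 : (∑ k ∈ range (a+1), k * q) = (∑ k ∈ range (a+1), k) * q := by
    rw [Finset.sum_mul]
  have h4 : (∑ k ∈ range (a+1), k) * 2 = (a+1) * a := Finset.sum_range_id_mul_two (a+1)
  have h5 : 2 * ((∑ k ∈ range (a+1), k) * q) = q * a * (a+1) := by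
    have : (∑ k ∈ range (a+1), k) * 2 * q = (a+1) * a * q := by rw [h4]
    nlinarith [this]
  have h6 : 2*((K-a)*m) = 2*(K-a)*m := by ring
  omega


lemma key_int (n a b r s m : ℤ) (hn : 1 ≤ n) (hb0 : 0 ≤ b) (hr : 0 ≤ r) (hrn : r < n)
    (hs0 : 0 ≤ s) (hsn : s ≤ n) (e1 : m = n*a + r) (e2 : m = (n+1)*b + s)
    (hm : 2*m ≤ n*(n+1)) :
    n*(n*a*(a+1)+2*(n-a)*m) ≤ (n+1)*((n+1)*b*(b+1)+2*(n-1-b)*m)+2*m := by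
  have ha0 : 0 ≤ a := by nlinarith
  have h2b : 2*b ≤ n := by nlinarith
  have hba : b ≤ a := by nlinarith
  have hab : a ≤ b + 1 := by nlinarith
  have hs_eq : s = n*a + r - (n+1)*b := by linarith
  have expand : (n+1)*((n+1)*b*(b+1)+2*(n-1-b)*m)+2*m - n*(n*a*(a+1)+2*(n-a)*m)
      = a*n - (s-r)*(n+1-s-r) := by
    rw [hs_eq, e1]; ring
  have key : (s-r)*(n+1-s-r) ≤ a*n := by
    have hcase : a = b ∨ a = b + 1 := by omega
    rcases hcase with h | h
    · have hd : s - r = -b := by rw [hs_eq, h]; ring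
      rcases le_or_gt (s + r) (n+1) with h2 | h2
      · nlinarith
      · nlinarith
    · have hd : s - r = n - b := by rw [hs_eq, h]; ring
      have h3 : n + 1 - s - r = b + 1 - 2*r := by rw [hs_eq, h]; ring
      rcases le_or_gt (b+1) (2*r) with h2 | h2
      · nlinarith
      · nlinarith
  linarith


lemma key2_int (n a b r s m : ℤ) (hn : 1 ≤ n) (hb0 : 0 ≤ b) (hr : 0 ≤ r) (hrn : r < n)
    (hs0 : 0 ≤ s) (hsn : s ≤ n) (e1 : m = n*a + r) (e2 : m = (n+1)*b + s)
    (hm : 2*m ≤ n*(n+1)) :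
    (n+1)*((n+1)*b*(b+1)+2*(n-1-b)*m) ≤ n*(n*a*(a+1)+2*(n-a)*m) := by
  have ha0 : 0 ≤ a := by nlinarith
  have h2b : 2*b ≤ n := by nlinarith
  have hba : b ≤ a := by nlinarith
  have hab : a ≤ b + 1 := by nlinarith
  have hs_eq : s = n*a + r - (n+1)*b := by linarith
  have expand : n*(n*a*(a+1)+2*(n-a)*m) - ((n+1)*((n+1)*b*(b+1)+2*(n-1-b)*m))
      = 2*m - (a*n - (s-r)*(n+1-s-r)) := by
    rw [hs_eq, e1]; ring
  have key : a*n - (s-r)*(n+1-s-r) ≤ 2*m := by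
    have hcase : a = b ∨ a = b + 1 := by omega
    rcases hcase with h | h
    · have hd : r - s = b := by rw [hs_eq, h]; ring
      rcases le_or_gt (n+1) (s+r) with h2 | h2
      · nlinarith
      · nlinarith
    · have hd : r - s = b - n := by rw [hs_eq, h]; ring
      have hrb : r ≤ b := by omega
      rcases le_or_gt (n+1) (s+r) with h2 | h2
      · nlinarith
      · nlinarith
  linarith


lemma refl1 (n m' : ℕ) (hm : m' ≤ n*(n+1)) :
    2 * (∑ k ∈ range (n+1), min (k*n) (n*(n+1) - m')) + 2*(n+1)*m'
      = n*(n*(n+1)) + 2 * (∑ k ∈ range (n+1), min (k*n) m') + 2*m' := by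
  have hterm : ∀ k ∈ range (n+1),
      min (k*n) (n*(n+1) - m') + m' = k*n + min ((n+1-k)*n) m' := by
    intro k hk
    simp only [mem_range] at hk
    have h1 : (n+1-k)*n = (n+1)*n - k*n := by rw [Nat.sub_mul]
    have h2 : k*n ≤ (n+1)*n := Nat.mul_le_mul_right _ (by omega)
    have h3 : (n+1)*n = n*(n+1) := Nat.mul_comm _ _
    omega
  have hsum : ∑ k ∈ range (n+1), (min (k*n) (n*(n+1) - m') + m')
      = ∑ k ∈ range (n+1), (k*n + min ((n+1-k)*n) m') := Finset.sum_congr rfl hterm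
  rw [Finset.sum_add_distrib, Finset.sum_add_distrib, Finset.sum_const, card_range] at hsum
  simp only [smul_eq_mul] at hsum
  have hp1 : 2*(n+1)*m' = 2*((n+1)*m') := by ring
  have hrefl : ∑ k ∈ range (n+1), min ((n+1-k)*n) m'
      = ∑ k ∈ range (n+1), min ((k+1)*n) m' := by
    rw [← Finset.sum_range_reflect]
    apply Finset.sum_congr rfl
    intro j hj
    simp only [mem_range] at hj
    congr 2
    omega
  have hshift : ∑ k ∈ range (n+1), min ((k+1)*n) m'
      = ∑ k ∈ range (n+2), min (k*n) m' - min 0 m' := by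
    rw [Finset.sum_range_succ' (fun k => min (k*n) m') (n+1)]
    simp
  have hlast : ∑ k ∈ range (n+2), min (k*n) m'
      = ∑ k ∈ range (n+1), min (k*n) m' + m' := by
    rw [Finset.sum_range_succ]
    congr 1
    have : n*(n+1) ≤ (n+1)*n := le_of_eq (Nat.mul_comm _ _)
    omega
  have hgauss : (∑ k ∈ range (n+1), k) * 2 = (n+1)*n := Finset.sum_range_id_mul_two (n+1)
  have hkn : ∑ k ∈ range (n+1), k*n = (∑ k ∈ range (n+1), k) * n := by rw [Finset.sum_mul]
  have hmul : 2 * ((∑ k ∈ range (n+1), k) * n) = (n+1)*n*n := by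
    rw [show 2 * ((∑ k ∈ range (n+1), k) * n) = ((∑ k ∈ range (n+1), k) * 2) * n by ring, hgauss]
  have hnn : (n+1)*n*n = n*(n*(n+1)) := by ring
  omega

lemma refl2 (n m' : ℕ) (hn : 1 ≤ n) (hm : m' ≤ n*(n+1)) :
    2 * (∑ k ∈ range n, min (k*(n+1)) (n*(n+1) - m')) + 2*n*m'
      = (n-1)*(n*(n+1)) + 2 * (∑ k ∈ range n, min (k*(n+1)) m') + 2*m' := by
  have hterm : ∀ k ∈ range n,
      min (k*(n+1)) (n*(n+1) - m') + m' = k*(n+1) + min ((n-1-k+1)*(n+1)) m' := by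
    intro k hk
    simp only [mem_range] at hk
    have he : n-1-k+1 = n - k := by omega
    rw [he]
    have h1 : (n-k)*(n+1) = n*(n+1) - k*(n+1) := by rw [Nat.sub_mul]
    have h2 : k*(n+1) ≤ n*(n+1) := Nat.mul_le_mul_right _ (by omega)
    omega
  have hsum : ∑ k ∈ range n, (min (k*(n+1)) (n*(n+1) - m') + m')
      = ∑ k ∈ range n, (k*(n+1) + min ((n-1-k+1)*(n+1)) m') := Finset.sum_congr rfl hterm
  rw [Finset.sum_add_distrib, Finset.sum_add_distrib, Finset.sum_const, card_range] at hsum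
  simp only [smul_eq_mul] at hsum
  have hp1 : 2*n*m' = 2*(n*m') := by ring
  have hrefl : ∑ k ∈ range n, min ((n-1-k+1)*(n+1)) m'
      = ∑ k ∈ range n, min ((k+1)*(n+1)) m' := by
    rw [← Finset.sum_range_reflect (fun k => min ((k+1)*(n+1)) m') n]
  have hshift : ∑ k ∈ range n, min ((k+1)*(n+1)) m'
      = ∑ k ∈ range (n+1), min (k*(n+1)) m' - min 0 m' := by
    rw [Finset.sum_range_succ' (fun k => min (k*(n+1)) m') n]
    simp
  have hlast : ∑ k ∈ range (n+1), min (k*(n+1)) m'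
      = ∑ k ∈ range n, min (k*(n+1)) m' + m' := by
    rw [Finset.sum_range_succ]
    congr 1
    omega
  have hgauss : (∑ k ∈ range n, k) * 2 = n*(n-1) := Finset.sum_range_id_mul_two n
  have hkn : ∑ k ∈ range n, k*(n+1) = (∑ k ∈ range n, k) * (n+1) := by rw [Finset.sum_mul]
  have hmul : 2 * ((∑ k ∈ range n, k) * (n+1)) = n*(n-1)*(n+1) := by
    rw [show 2 * ((∑ k ∈ range n, k) * (n+1)) = ((∑ k ∈ range n, k) * 2) * (n+1) by ring, hgauss]
  have hnn : n*(n-1)*(n+1) = (n-1)*(n*(n+1)) := by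
    cases n with
    | zero => rfl
    | succ k => simp only [Nat.succ_sub_one]; ring
  omega

lemma key_half' (n m A B R S T1 T2 : ℕ) (hn : 1 ≤ n) (hm : 2*m ≤ n*(n+1))
    (e1 : n*A + R = m) (e2 : (n+1)*B + S = m) (hR : R < n) (hS : S < n+1)
    (hA1 : A ≤ n) (hB : B ≤ n - 1)
    (eq1 : 2 * T1 = n*A*(A+1) + 2*(n-A)*m)
    (eq2 : 2 * T2 = (n+1)*B*(B+1) + 2*(n-1-B)*m) :
    n * T1 ≤ (n+1)*T2 + m := by
  have hki := key_int (n:ℤ) A B R S m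
    (by exact_mod_cast hn) (by positivity) (by positivity) (by exact_mod_cast hR)
    (by positivity) (by exact_mod_cast Nat.lt_succ_iff.mp hS)
    (by exact_mod_cast e1.symm) (by exact_mod_cast e2.symm) (by exact_mod_cast hm)
  zify [hA1, hB, hn] at eq1 eq2 ⊢
  have c1 : 2*((n:ℤ)*T1) = (n:ℤ)*((n:ℤ)*A*(A+1)+2*((n:ℤ)-A)*m) := by
    rw [show (2:ℤ)*((n:ℤ)*T1) = (n:ℤ)*(2*T1) by ring, eq1]
  have c2 : 2*(((n:ℤ)+1)*T2) = ((n:ℤ)+1)*(((n:ℤ)+1)*B*(B+1)+2*((n:ℤ)-1-B)*m) := by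
    rw [show (2:ℤ)*(((n:ℤ)+1)*T2) = ((n:ℤ)+1)*(2*T2) by ring, eq2]
  linarith [hki, c1, c2]

lemma key_half (n m : ℕ) (hn : 1 ≤ n) (hm : 2*m ≤ n*(n+1)) :
    n * ∑ k ∈ range (n+1), min (k*n) m ≤ (n+1) * ∑ k ∈ range n, min (k*(n+1)) m + m := by
  have han : m / n * n ≤ m := Nat.div_mul_le_self m n
  have hbn : m / (n+1) * (n+1) ≤ m := Nat.div_mul_le_self m (n+1)
  have hA1 : m / n ≤ n := by nlinarith
  have hB : m / (n+1) ≤ n - 1 := by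
    have hb1 : m / (n+1) + 1 ≤ n := by nlinarith
    omega
  have eq2 := sum_min_closed (n+1) (n-1) m (by omega) hB
  rw [show n - 1 + 1 = n by omega] at eq2
  exact key_half' n m (m/n) (m/(n+1)) (m%n) (m%(n+1)) _ _ hn hm
    (Nat.div_add_mod m n) (Nat.div_add_mod m (n+1))
    (Nat.mod_lt m (by omega)) (Nat.mod_lt m (by omega)) hA1 hB
    (sum_min_closed n n m hn hA1) eq2


lemma glue (n m' H T1r T2r T1 T2 : ℕ) (hn : 1 ≤ n) (h2H : 2*H = n*(n+1))
    (r1 : 2*T1r + 2*(n+1)*m' = n*(n*(n+1)) + 2*T1 + 2*m')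
    (r2 : 2*T2r + 2*n*m' = (n-1)*(n*(n+1)) + 2*T2 + 2*m')
    (kh : n*T1 ≤ (n+1)*T2 + m') :
    n*T1r ≤ (n+1)*T2r + H := by
  zify [hn] at r1 r2 kh ⊢
  have R1 : (n:ℤ)*(2*T1r + 2*(n+1)*m') = (n:ℤ)*(n*(n*(n+1)) + 2*T1 + 2*m') := by rw [r1]
  have R2 : ((n:ℤ)+1)*(2*T2r + 2*n*m') = ((n:ℤ)+1)*((n-1)*(n*(n+1)) + 2*T2 + 2*m') := by rw [r2]
  have h2H' : (2:ℤ)*H = n*(n+1) := by exact_mod_cast h2H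
  nlinarith [R1, R2, kh, h2H']

lemma key_arith (n m : ℕ) (hn : 1 ≤ n) (hm : m ≤ n*(n+1)) :
    n * ∑ k ∈ range (n+1), min (k*n) m
      ≤ (n+1) * ∑ k ∈ range n, min (k*(n+1)) m + min (n*(n+1)/2) m := by
  obtain ⟨H, hHdef⟩ : ∃ H, n*(n+1) = 2*H := by
    obtain ⟨c, hc⟩ := Nat.even_mul_succ_self n
    exact ⟨c, by omega⟩
  rw [show n*(n+1)/2 = H by omega]
  have heven : 2*H = n*(n+1) := by omega
  rcases le_or_gt (2*m) (n*(n+1)) with h | h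
  · have := key_half n m hn h
    have hminm : min H m = m := by omega
    omega
  · set m' := n*(n+1) - m with hm'
    have hmm : m = n*(n+1) - m' := by omega
    have hm'le : m' ≤ n*(n+1) := by omega
    have kh := key_half n m' hn (by omega)
    have r1 := refl1 n m' hm'le
    have r2 := refl2 n m' hn hm'le
    have hminH : min H m = H := by omega
    rw [hminH, hmm]
    exact glue n m' H _ _ _ _ hn heven r1 r2 kh

lemma key_eq (n : ℕ) (hn : 1 ≤ n) :
    n * ∑ k ∈ range (n+1), min (k*n) (n*(n+1))
      = (n+1) * ∑ k ∈ range n, min (k*(n+1)) (n*(n+1)) + n*(n+1)/2 := by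
  obtain ⟨H, hHdef⟩ : ∃ H, n*(n+1) = 2*H := by
    obtain ⟨c, hc⟩ := Nat.even_mul_succ_self n
    exact ⟨c, by omega⟩
  rw [show n*(n+1)/2 = H by omega]
  have heven : 2*H = n*(n+1) := by omega
  have h1 : ∑ k ∈ range (n+1), min (k*n) (n*(n+1)) = ∑ k ∈ range (n+1), k*n := by
    apply Finset.sum_congr rfl
    intro k hk
    simp only [mem_range] at hk
    have : k*n ≤ n*(n+1) := by
      calc k*n ≤ (n+1)*n := Nat.mul_le_mul_right _ (by omega)
      _ = n*(n+1) := Nat.mul_comm _ _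
    omega
  have h2 : ∑ k ∈ range n, min (k*(n+1)) (n*(n+1)) = ∑ k ∈ range n, k*(n+1) := by
    apply Finset.sum_congr rfl
    intro k hk
    simp only [mem_range] at hk
    have : k*(n+1) ≤ n*(n+1) := Nat.mul_le_mul_right _ (by omega)
    omega
  rw [h1, h2]
  have g1 : (∑ k ∈ range (n+1), k) * 2 = (n+1)*n := Finset.sum_range_id_mul_two (n+1)
  have g2 : (∑ k ∈ range n, k) * 2 = n*(n-1) := Finset.sum_range_id_mul_two n
  have e1 : ∑ k ∈ range (n+1), k*n = (∑ k ∈ range (n+1), k) * n := by rw [Finset.sum_mul]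
  have e2 : ∑ k ∈ range n, k*(n+1) = (∑ k ∈ range n, k) * (n+1) := by rw [Finset.sum_mul]
  rw [e1, e2]
  zify [hn] at g1 g2 heven ⊢
  have c1 : 2*((n:ℤ)*((∑ k ∈ range (n+1), (k:ℤ))*n)) = ((n:ℤ)+1)*n*n*n := by
    rw [show 2*((n:ℤ)*((∑ k ∈ range (n+1), (k:ℤ))*n)) = ((∑ k ∈ range (n+1), (k:ℤ))*2)*n*n by ring]
    rw [g1]
  have c2 : 2*(((n:ℤ)+1)*((∑ k ∈ range n, (k:ℤ))*((n:ℤ)+1))) = (n:ℤ)*((n:ℤ)-1)*((n:ℤ)+1)*((n:ℤ)+1) := by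
    rw [show 2*(((n:ℤ)+1)*((∑ k ∈ range n, (k:ℤ))*((n:ℤ)+1))) = ((∑ k ∈ range n, (k:ℤ))*2)*((n:ℤ)+1)*((n:ℤ)+1) by ring]
    rw [g2]
  linarith [c1, c2, heven]


lemma key2_half' (n m A B R S T1 T2 : ℕ) (hn : 1 ≤ n) (hm : 2*m ≤ n*(n+1))
    (e1 : n*A + R = m) (e2 : (n+1)*B + S = m) (hR : R < n) (hS : S < n+1)
    (hA1 : A ≤ n) (hB : B ≤ n - 1)
    (eq1 : 2 * T1 = n*A*(A+1) + 2*(n-A)*m)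
    (eq2 : 2 * T2 = (n+1)*B*(B+1) + 2*(n-1-B)*m) :
    (n+1) * T2 ≤ n * T1 := by
  have hki := key2_int (n:ℤ) A B R S m
    (by exact_mod_cast hn) (by positivity) (by positivity) (by exact_mod_cast hR)
    (by positivity) (by exact_mod_cast Nat.lt_succ_iff.mp hS)
    (by exact_mod_cast e1.symm) (by exact_mod_cast e2.symm) (by exact_mod_cast hm)
  zify [hA1, hB, hn] at eq1 eq2 ⊢
  have c1 : 2*((n:ℤ)*T1) = (n:ℤ)*((n:ℤ)*A*(A+1)+2*((n:ℤ)-A)*m) := by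
    rw [show (2:ℤ)*((n:ℤ)*T1) = (n:ℤ)*(2*T1) by ring, eq1]
  have c2 : 2*(((n:ℤ)+1)*T2) = ((n:ℤ)+1)*(((n:ℤ)+1)*B*(B+1)+2*((n:ℤ)-1-B)*m) := by
    rw [show (2:ℤ)*(((n:ℤ)+1)*T2) = ((n:ℤ)+1)*(2*T2) by ring, eq2]
  linarith [hki, c1, c2]

lemma key2_half (n m : ℕ) (hn : 1 ≤ n) (hm : 2*m ≤ n*(n+1)) :
    (n+1) * ∑ k ∈ range n, min (k*(n+1)) m ≤ n * ∑ k ∈ range (n+1), min (k*n) m := by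
  have han : m / n * n ≤ m := Nat.div_mul_le_self m n
  have hbn : m / (n+1) * (n+1) ≤ m := Nat.div_mul_le_self m (n+1)
  have hA1 : m / n ≤ n := by nlinarith
  have hB : m / (n+1) ≤ n - 1 := by
    have hb1 : m / (n+1) + 1 ≤ n := by nlinarith
    omega
  have eq2 := sum_min_closed (n+1) (n-1) m (by omega) hB
  rw [show n - 1 + 1 = n by omega] at eq2
  exact key2_half' n m (m/n) (m/(n+1)) (m%n) (m%(n+1)) _ _ hn hm
    (Nat.div_add_mod m n) (Nat.div_add_mod m (n+1))
    (Nat.mod_lt m (by omega)) (Nat.mod_lt m (by omega)) hA1 hB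
    (sum_min_closed n n m hn hA1) eq2

lemma glue2 (n m' H T1r T2r T1 T2 : ℕ) (hn : 1 ≤ n) (h2H : 2*H = n*(n+1))
    (r1 : 2*T1r + 2*(n+1)*m' = n*(n*(n+1)) + 2*T1 + 2*m')
    (r2 : 2*T2r + 2*n*m' = (n-1)*(n*(n+1)) + 2*T2 + 2*m')
    (hm' : m' ≤ n*(n+1))
    (kh : (n+1)*T2 ≤ n*T1) :
    (n+1)*T2r + (n*(n+1) - m') ≤ n*T1r + H := by
  zify [hn, hm'] at r1 r2 kh ⊢
  have R1 : (n:ℤ)*(2*T1r + 2*(n+1)*m') = (n:ℤ)*(n*(n*(n+1)) + 2*T1 + 2*m') := by rw [r1]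
  have R2 : ((n:ℤ)+1)*(2*T2r + 2*n*m') = ((n:ℤ)+1)*((n-1)*(n*(n+1)) + 2*T2 + 2*m') := by rw [r2]
  have h2H' : (2:ℤ)*H = n*(n+1) := by exact_mod_cast h2H
  nlinarith [R1, R2, kh, h2H']

lemma key2_arith (n m : ℕ) (hn : 1 ≤ n) (hm : m ≤ n*(n+1)) :
    (n+1) * ∑ k ∈ range n, min (k*(n+1)) m + m
      ≤ n * ∑ k ∈ range (n+1), min (k*n) m + min (n*(n+1)/2) m := by
  obtain ⟨H, hHdef⟩ : ∃ H, n*(n+1) = 2*H := by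
    obtain ⟨c, hc⟩ := Nat.even_mul_succ_self n
    exact ⟨c, by omega⟩
  rw [show n*(n+1)/2 = H by omega]
  have heven : 2*H = n*(n+1) := by omega
  rcases le_or_gt (2*m) (n*(n+1)) with h | h
  · have := key2_half n m hn h
    have hminm : min H m = m := by omega
    omega
  · set m' := n*(n+1) - m with hm'
    have hmm : m = n*(n+1) - m' := by omega
    have hm'le : m' ≤ n*(n+1) := by omega
    have kh := key2_half n m' hn (by omega)
    have r1 := refl1 n m' hm'le
    have r2 := refl2 n m' hn hm'le
    have hminH : min H m = H := by omega
    rw [hminH, hmm]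
    exact glue2 n m' H _ _ _ _ hn heven r1 r2 hm'le kh


lemma count_ite (p m : ℕ) :
    ∑ j ∈ range m, (if j < p then (1:ℝ) else 0) = ((min p m : ℕ) : ℝ) := by
  induction m with
  | zero => simp
  | succ m ih =>
    rw [Finset.sum_range_succ, ih]
    by_cases h : m < p
    · rw [if_pos h, show min p (m+1) = min p m + 1 by omega]
      push_cast; ring
    · rw [if_neg h, show min p (m+1) = min p m by omega]
      ring

lemma tele (G : ℕ → ℝ) (N p : ℕ) (hp : p ≤ N) :
    ∑ j ∈ range N, (if j < p then (G (j+1) - G j) else 0) = G p - G 0 := by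
  have hfilter : (range N).filter (fun j => j < p) = range p := by
    ext x; simp only [Finset.mem_filter, Finset.mem_range]; omega
  rw [← Finset.sum_filter, hfilter, Finset.sum_range_sub]

lemma C1 (n : ℕ) (hn : 1 ≤ n) (G : ℕ → ℝ)
    (hconc : ∀ j, j + 2 ≤ n*(n+1) → G (j+2) - G (j+1) ≤ G (j+1) - G j) :
    n * ∑ k ∈ range (n+1), G (k*n) + G 0
      ≤ (n+1) * ∑ k ∈ range n, G (k*(n+1)) + G (n*(n+1)/2) := by
  set N := n*(n+1) with hN
  set H := N/2 with hH
  have hHN : H ≤ N := Nat.div_le_self _ _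
  have hkn : ∀ k ∈ range (n+1), k*n ≤ N := by
    intro k hk; simp only [Finset.mem_range] at hk
    calc k*n ≤ (n+1)*n := Nat.mul_le_mul_right _ (by omega)
    _ = N := Nat.mul_comm _ _
  have hkn1 : ∀ k ∈ range n, k*(n+1) ≤ N := by
    intro k hk; simp only [Finset.mem_range] at hk
    exact Nat.mul_le_mul_right _ (by omega)
  set D : ℕ → ℝ := fun j => G (j+1) - G j with hD
  set E : ℕ → ℝ := fun j =>
    ((n+1) * ∑ k ∈ range n, (if j < k*(n+1) then (1:ℝ) else 0)
      + (if j < H then (1:ℝ) else 0))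
    - n * ∑ k ∈ range (n+1), (if j < k*n then (1:ℝ) else 0) with hE
  have hS : ∀ m, ∑ j ∈ range m, E j =
      ((n+1) * ∑ k ∈ range n, ((min (k*(n+1)) m : ℕ):ℝ) + ((min H m : ℕ):ℝ))
      - n * ∑ k ∈ range (n+1), ((min (k*n) m : ℕ):ℝ) := by
    intro m
    have hA : ∑ j ∈ range m, ∑ k ∈ range n, (if j < k*(n+1) then (1:ℝ) else 0)
        = ∑ k ∈ range n, ((min (k*(n+1)) m : ℕ):ℝ) := by
      rw [Finset.sum_comm]
      exact Finset.sum_congr rfl (fun k _ => count_ite _ m)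
    have hC : ∑ j ∈ range m, ∑ k ∈ range (n+1), (if j < k*n then (1:ℝ) else 0)
        = ∑ k ∈ range (n+1), ((min (k*n) m : ℕ):ℝ) := by
      rw [Finset.sum_comm]
      exact Finset.sum_congr rfl (fun k _ => count_ite _ m)
    simp only [hE]
    rw [Finset.sum_sub_distrib, Finset.sum_add_distrib, ← Finset.mul_sum, ← Finset.mul_sum,
      hA, hC, count_ite H m]
  have hpartial : ∀ m, m ≤ N → 0 ≤ ∑ j ∈ range m, E j := by
    intro m hm
    rw [hS m]
    have := key_arith n m hn (by omega)
    have hcast : ((n:ℝ)) * ∑ k ∈ range (n+1), ((min (k*n) m : ℕ):ℝ)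
        ≤ (n+1) * ∑ k ∈ range n, ((min (k*(n+1)) m : ℕ):ℝ) + ((min H m : ℕ):ℝ) := by
      exact_mod_cast this
    linarith
  have htotal : ∑ j ∈ range N, E j = 0 := by
    rw [hS N]
    have := key_eq n hn
    have hcast : ((n:ℝ)) * ∑ k ∈ range (n+1), ((min (k*n) N : ℕ):ℝ)
        = (n+1) * ∑ k ∈ range n, ((min (k*(n+1)) N : ℕ):ℝ) + ((min H N : ℕ):ℝ) := by
      rw [show min H N = H by omega]
      exact_mod_cast this
    linarith
  have habel : 0 ≤ ∑ j ∈ range N, D j * E j := by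
    have hbp := Finset.sum_range_by_parts D E N
    simp only [smul_eq_mul] at hbp
    have hterm : ∀ i ∈ range (N-1), (D (i+1) - D i) * ∑ j ∈ range (i+1), E j ≤ 0 := by
      intro i hi
      simp only [Finset.mem_range] at hi
      have h1 : D (i+1) - D i ≤ 0 := by
        have := hconc i (by omega)
        simp only [hD]
        linarith
      exact mul_nonpos_of_nonpos_of_nonneg h1 (hpartial (i+1) (by omega))
    have := Finset.sum_nonpos hterm
    rw [hbp, htotal, mul_zero, zero_sub]
    linarith
  -- expand ∑ D * E
  have e1 : ∀ p, p ≤ N → ∑ j ∈ range N, (if j < p then (1:ℝ) else 0) * D j = G p - G 0 := by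
    intro p hp
    rw [← tele G N p hp]
    apply Finset.sum_congr rfl
    intro j _
    by_cases h : j < p <;> simp [h, hD]
  have t1 : ∑ j ∈ range N, (∑ k ∈ range n, (if j < k*(n+1) then (1:ℝ) else 0)) * D j
      = ∑ k ∈ range n, (G (k*(n+1)) - G 0) := by
    calc ∑ j ∈ range N, (∑ k ∈ range n, (if j < k*(n+1) then (1:ℝ) else 0)) * D j
        = ∑ j ∈ range N, ∑ k ∈ range n, (if j < k*(n+1) then (1:ℝ) else 0) * D j := by
          exact Finset.sum_congr rfl (fun j _ => Finset.sum_mul _ _ _)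
      _ = ∑ k ∈ range n, ∑ j ∈ range N, (if j < k*(n+1) then (1:ℝ) else 0) * D j :=
          Finset.sum_comm
      _ = ∑ k ∈ range n, (G (k*(n+1)) - G 0) :=
          Finset.sum_congr rfl (fun k hk => e1 _ (hkn1 k hk))
  have t2 : ∑ j ∈ range N, (∑ k ∈ range (n+1), (if j < k*n then (1:ℝ) else 0)) * D j
      = ∑ k ∈ range (n+1), (G (k*n) - G 0) := by
    calc ∑ j ∈ range N, (∑ k ∈ range (n+1), (if j < k*n then (1:ℝ) else 0)) * D j
        = ∑ j ∈ range N, ∑ k ∈ range (n+1), (if j < k*n then (1:ℝ) else 0) * D j := by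
          exact Finset.sum_congr rfl (fun j _ => Finset.sum_mul _ _ _)
      _ = ∑ k ∈ range (n+1), ∑ j ∈ range N, (if j < k*n then (1:ℝ) else 0) * D j :=
          Finset.sum_comm
      _ = ∑ k ∈ range (n+1), (G (k*n) - G 0) :=
          Finset.sum_congr rfl (fun k hk => e1 _ (hkn k hk))
  have t3 : ∑ j ∈ range N, (if j < H then (1:ℝ) else 0) * D j = G H - G 0 := e1 H hHN
  have hexp : ∑ j ∈ range N, D j * E j
      = (n+1) * (∑ k ∈ range n, (G (k*(n+1)) - G 0)) + (G H - G 0)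
        - n * (∑ k ∈ range (n+1), (G (k*n) - G 0)) := by
    have hj : ∀ j ∈ range N, D j * E j
        = (n+1) * ((∑ k ∈ range n, (if j < k*(n+1) then (1:ℝ) else 0)) * D j)
          + (if j < H then (1:ℝ) else 0) * D j
          - n * ((∑ k ∈ range (n+1), (if j < k*n then (1:ℝ) else 0)) * D j) := by
      intro j _
      simp only [hE]
      ring
    rw [Finset.sum_congr rfl hj, Finset.sum_sub_distrib, Finset.sum_add_distrib,
      ← Finset.mul_sum, ← Finset.mul_sum, t1, t2, t3]
  have hsplit1 : ∑ k ∈ range n, (G (k*(n+1)) - G 0)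
      = (∑ k ∈ range n, G (k*(n+1))) - n * G 0 := by
    rw [Finset.sum_sub_distrib, Finset.sum_const, card_range, nsmul_eq_mul]
  have hsplit2 : ∑ k ∈ range (n+1), (G (k*n) - G 0)
      = (∑ k ∈ range (n+1), G (k*n)) - (n+1) * G 0 := by
    rw [Finset.sum_sub_distrib, Finset.sum_const, card_range, nsmul_eq_mul]
    push_cast; ring
  rw [hexp, hsplit1, hsplit2] at habel
  push_cast at habel ⊢
  nlinarith [habel]


lemma C2 (n : ℕ) (hn : 1 ≤ n) (G : ℕ → ℝ)
    (hconc : ∀ j, j + 2 ≤ n*(n+1) → G (j+2) - G (j+1) ≤ G (j+1) - G j) :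
    (n+1) * ∑ k ∈ range n, G (k*(n+1)) + G (n*(n+1))
      ≤ n * ∑ k ∈ range (n+1), G (k*n) + G (n*(n+1)/2) := by
  set N := n*(n+1) with hN
  set H := N/2 with hH
  have heven : 2*H = N := by
    obtain ⟨c, hc⟩ := Nat.even_mul_succ_self n
    omega
  have hHN : H ≤ N := Nat.div_le_self _ _
  have hkn : ∀ k ∈ range (n+1), k*n ≤ N := by
    intro k hk; simp only [Finset.mem_range] at hk
    calc k*n ≤ (n+1)*n := Nat.mul_le_mul_right _ (by omega)
    _ = N := Nat.mul_comm _ _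
  have hkn1 : ∀ k ∈ range n, k*(n+1) ≤ N := by
    intro k hk; simp only [Finset.mem_range] at hk
    exact Nat.mul_le_mul_right _ (by omega)
  set D : ℕ → ℝ := fun j => G (j+1) - G j with hD
  set E : ℕ → ℝ := fun j =>
    (n * ∑ k ∈ range (n+1), (if j < k*n then (1:ℝ) else 0)
      + (if j < H then (1:ℝ) else 0))
    - ((n+1) * ∑ k ∈ range n, (if j < k*(n+1) then (1:ℝ) else 0)
      + (if j < N then (1:ℝ) else 0)) with hE
  have hS : ∀ m, ∑ j ∈ range m, E j =
      (n * ∑ k ∈ range (n+1), ((min (k*n) m : ℕ):ℝ) + ((min H m : ℕ):ℝ))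
      - ((n+1) * ∑ k ∈ range n, ((min (k*(n+1)) m : ℕ):ℝ) + ((min N m : ℕ):ℝ)) := by
    intro m
    have hA : ∑ j ∈ range m, ∑ k ∈ range n, (if j < k*(n+1) then (1:ℝ) else 0)
        = ∑ k ∈ range n, ((min (k*(n+1)) m : ℕ):ℝ) := by
      rw [Finset.sum_comm]
      exact Finset.sum_congr rfl (fun k _ => count_ite _ m)
    have hC : ∑ j ∈ range m, ∑ k ∈ range (n+1), (if j < k*n then (1:ℝ) else 0)
        = ∑ k ∈ range (n+1), ((min (k*n) m : ℕ):ℝ) := by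
      rw [Finset.sum_comm]
      exact Finset.sum_congr rfl (fun k _ => count_ite _ m)
    simp only [hE]
    rw [Finset.sum_sub_distrib, Finset.sum_add_distrib, Finset.sum_add_distrib,
      ← Finset.mul_sum, ← Finset.mul_sum, hA, hC, count_ite H m, count_ite N m]
  have hpartial : ∀ m, m ≤ N → 0 ≤ ∑ j ∈ range m, E j := by
    intro m hm
    rw [hS m]
    have := key2_arith n m hn (by omega)
    have hminN : min N m = m := by omega
    rw [hminN]
    have hcast : ((n:ℝ)+1) * ∑ k ∈ range n, ((min (k*(n+1)) m : ℕ):ℝ) + (m:ℝ)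
        ≤ (n:ℝ) * ∑ k ∈ range (n+1), ((min (k*n) m : ℕ):ℝ) + ((min H m : ℕ):ℝ) := by
      exact_mod_cast this
    linarith
  have htotal : ∑ j ∈ range N, E j = 0 := by
    rw [hS N]
    have := key_eq n hn
    have hcast : ((n:ℝ)) * ∑ k ∈ range (n+1), ((min (k*n) N : ℕ):ℝ)
        = ((n:ℝ)+1) * ∑ k ∈ range n, ((min (k*(n+1)) N : ℕ):ℝ) + ((H:ℕ):ℝ) := by
      exact_mod_cast this
    have hminH : min H N = H := by omega
    have hminN : min N N = N := by omega
    rw [hminH, hminN]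
    have h2H : ((H:ℕ):ℝ) + ((H:ℕ):ℝ) = ((N:ℕ):ℝ) := by
      exact_mod_cast congrArg (Nat.cast : ℕ → ℝ) (by omega : H + H = N)
    linarith
  have habel : 0 ≤ ∑ j ∈ range N, D j * E j := by
    have hbp := Finset.sum_range_by_parts D E N
    simp only [smul_eq_mul] at hbp
    have hterm : ∀ i ∈ range (N-1), (D (i+1) - D i) * ∑ j ∈ range (i+1), E j ≤ 0 := by
      intro i hi
      simp only [Finset.mem_range] at hi
      have h1 : D (i+1) - D i ≤ 0 := by
        have := hconc i (by omega)
        simp only [hD]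
        linarith
      exact mul_nonpos_of_nonpos_of_nonneg h1 (hpartial (i+1) (by omega))
    have := Finset.sum_nonpos hterm
    rw [hbp, htotal, mul_zero, zero_sub]
    linarith
  have e1 : ∀ p, p ≤ N → ∑ j ∈ range N, (if j < p then (1:ℝ) else 0) * D j = G p - G 0 := by
    intro p hp
    rw [← tele G N p hp]
    apply Finset.sum_congr rfl
    intro j _
    by_cases h : j < p <;> simp [h, hD]
  have t1 : ∑ j ∈ range N, (∑ k ∈ range n, (if j < k*(n+1) then (1:ℝ) else 0)) * D j
      = ∑ k ∈ range n, (G (k*(n+1)) - G 0) := by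
    calc ∑ j ∈ range N, (∑ k ∈ range n, (if j < k*(n+1) then (1:ℝ) else 0)) * D j
        = ∑ j ∈ range N, ∑ k ∈ range n, (if j < k*(n+1) then (1:ℝ) else 0) * D j := by
          exact Finset.sum_congr rfl (fun j _ => Finset.sum_mul _ _ _)
      _ = ∑ k ∈ range n, ∑ j ∈ range N, (if j < k*(n+1) then (1:ℝ) else 0) * D j :=
          Finset.sum_comm
      _ = ∑ k ∈ range n, (G (k*(n+1)) - G 0) :=
          Finset.sum_congr rfl (fun k hk => e1 _ (hkn1 k hk))
  have t2 : ∑ j ∈ range N, (∑ k ∈ range (n+1), (if j < k*n then (1:ℝ) else 0)) * D j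
      = ∑ k ∈ range (n+1), (G (k*n) - G 0) := by
    calc ∑ j ∈ range N, (∑ k ∈ range (n+1), (if j < k*n then (1:ℝ) else 0)) * D j
        = ∑ j ∈ range N, ∑ k ∈ range (n+1), (if j < k*n then (1:ℝ) else 0) * D j := by
          exact Finset.sum_congr rfl (fun j _ => Finset.sum_mul _ _ _)
      _ = ∑ k ∈ range (n+1), ∑ j ∈ range N, (if j < k*n then (1:ℝ) else 0) * D j :=
          Finset.sum_comm
      _ = ∑ k ∈ range (n+1), (G (k*n) - G 0) :=
          Finset.sum_congr rfl (fun k hk => e1 _ (hkn k hk))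
  have t3 : ∑ j ∈ range N, (if j < H then (1:ℝ) else 0) * D j = G H - G 0 := e1 H hHN
  have t4 : ∑ j ∈ range N, (if j < N then (1:ℝ) else 0) * D j = G N - G 0 := e1 N le_rfl
  have hexp : ∑ j ∈ range N, D j * E j
      = (n * (∑ k ∈ range (n+1), (G (k*n) - G 0)) + (G H - G 0))
        - ((n+1) * (∑ k ∈ range n, (G (k*(n+1)) - G 0)) + (G N - G 0)) := by
    have hj : ∀ j ∈ range N, D j * E j
        = (n * ((∑ k ∈ range (n+1), (if j < k*n then (1:ℝ) else 0)) * D j)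
            + (if j < H then (1:ℝ) else 0) * D j)
          - ((n+1) * ((∑ k ∈ range n, (if j < k*(n+1) then (1:ℝ) else 0)) * D j)
            + (if j < N then (1:ℝ) else 0) * D j) := by
      intro j _
      simp only [hE]
      ring
    rw [Finset.sum_congr rfl hj, Finset.sum_sub_distrib, Finset.sum_add_distrib,
      Finset.sum_add_distrib, ← Finset.mul_sum, ← Finset.mul_sum, t1, t2, t3, t4]
  have hsplit1 : ∑ k ∈ range n, (G (k*(n+1)) - G 0)
      = (∑ k ∈ range n, G (k*(n+1))) - n * G 0 := by
    rw [Finset.sum_sub_distrib, Finset.sum_const, card_range, nsmul_eq_mul]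
  have hsplit2 : ∑ k ∈ range (n+1), (G (k*n) - G 0)
      = (∑ k ∈ range (n+1), G (k*n)) - (n+1) * G 0 := by
    rw [Finset.sum_sub_distrib, Finset.sum_const, card_range, nsmul_eq_mul]
    push_cast; ring
  rw [hexp, hsplit1, hsplit2] at habel
  nlinarith [habel]


lemma shiftS (f : ℝ → ℝ) (n : ℕ) (hn : 1 ≤ n) :
    ∑ k ∈ range n, f (((k:ℝ)+1) / (n:ℝ)) = ∑ k ∈ range n, f ((k:ℝ)/(n:ℝ)) - f 0 + f 1 := by
  have hn0 : (n:ℝ) ≠ 0 := by positivity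
  have h1 : ∑ k ∈ range (n+1), f ((k:ℝ)/(n:ℝ))
      = ∑ k ∈ range n, f (((k:ℝ)+1)/(n:ℝ)) + f ((0:ℝ)/(n:ℝ)) := by
    rw [Finset.sum_range_succ' (fun k => f ((k:ℝ)/(n:ℝ))) n]
    push_cast
    rfl
  have h2 : ∑ k ∈ range (n+1), f ((k:ℝ)/(n:ℝ))
      = ∑ k ∈ range n, f ((k:ℝ)/(n:ℝ)) + f ((n:ℝ)/(n:ℝ)) := Finset.sum_range_succ _ n
  rw [zero_div] at h1
  rw [div_self hn0] at h2
  linarith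

lemma reflS (f : ℝ → ℝ) (n : ℕ) (hn : 1 ≤ n) :
    ∑ k ∈ range n, f (1 - (k:ℝ)/(n:ℝ)) = ∑ k ∈ range n, f ((k:ℝ)/(n:ℝ)) - f 0 + f 1 := by
  have hn0 : (n:ℝ) ≠ 0 := by positivity
  have hterm : ∀ k ∈ range n, f (1 - (k:ℝ)/(n:ℝ)) = f ((((n - k : ℕ)):ℝ)/(n:ℝ)) := by
    intro k hk
    simp only [Finset.mem_range] at hk
    congr 1
    rw [Nat.cast_sub (by omega)]
    field_simp
  rw [Finset.sum_congr rfl hterm]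
  have hrefl : ∑ k ∈ range n, f ((((n - k : ℕ)):ℝ)/(n:ℝ))
      = ∑ k ∈ range n, f (((k:ℝ)+1)/(n:ℝ)) := by
    rw [← Finset.sum_range_reflect (fun k => f (((k:ℝ)+1)/(n:ℝ))) n]
    apply Finset.sum_congr rfl
    intro j hj
    simp only [Finset.mem_range] at hj
    have hc : ((n-1-j:ℕ):ℝ) + 1 = ((n-j:ℕ):ℝ) := by
      exact_mod_cast congrArg (Nat.cast : ℕ → ℝ) (by omega : n-1-j+1 = n-j)
    rw [← hc]
  rw [hrefl, shiftS f n hn]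

lemma symm_sum (f : ℝ → ℝ) (n : ℕ) (hn : 1 ≤ n) :
    ∑ k ∈ range n, symmetrization f ((k:ℝ)/(n:ℝ))
      = ∑ k ∈ range n, f ((k:ℝ)/(n:ℝ)) + (f 1 - f 0)/2 := by
  have h : ∀ k ∈ range n, symmetrization f ((k:ℝ)/(n:ℝ))
      = (f ((k:ℝ)/(n:ℝ)) + f (1 - (k:ℝ)/(n:ℝ)))/2 := fun k _ => rfl
  rw [Finset.sum_congr rfl h]
  have : ∑ k ∈ range n, (f ((k:ℝ)/(n:ℝ)) + f (1 - (k:ℝ)/(n:ℝ)))/2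
      = (∑ k ∈ range n, f ((k:ℝ)/(n:ℝ)) + ∑ k ∈ range n, f (1 - (k:ℝ)/(n:ℝ)))/2 := by
    rw [← Finset.sum_add_distrib, ← Finset.sum_div]
  rw [this, reflS f n hn]
  ring

lemma iccS (f : ℝ → ℝ) (n : ℕ) (hn : 1 ≤ n) :
    ∑ k ∈ Finset.Icc 1 n, f ((k:ℝ)/(n:ℝ)) = ∑ k ∈ range n, f ((k:ℝ)/(n:ℝ)) - f 0 + f 1 := by
  have h : ∑ k ∈ Finset.Icc 1 n, f ((k:ℝ)/(n:ℝ))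
      = ∑ k ∈ range n, f (((1+k : ℕ):ℝ)/(n:ℝ)) := by
    rw [← Finset.Ico_add_one_right_eq_Icc, Finset.sum_Ico_eq_sum_range]
    simp
  rw [h]
  have h2 : ∀ k ∈ range n, f (((1+k : ℕ):ℝ)/(n:ℝ)) = f (((k:ℝ)+1)/(n:ℝ)) := by
    intro k _
    congr 2
    push_cast
    ring
  rw [Finset.sum_congr rfl h2, shiftS f n hn]

lemma case1 (f : ℝ → ℝ) (hg : ConcaveOn ℝ (Set.Icc (0:ℝ) 1) (symmetrization f))
    (h0 : f (1/2) ≤ f 0) :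
    (∀ n : ℕ, 1 ≤ n → riemannL f (n + 1) ≤ riemannL f n) ∧
    (∀ n : ℕ, 1 ≤ n → riemannR f n ≤ riemannR f (n + 1)) := by
  set g := symmetrization f with hgdef
  -- main estimates for a fixed n
  have main : ∀ n : ℕ, 1 ≤ n →
      ((n:ℝ) * ∑ k ∈ range (n+1), g ((k:ℝ)/((n:ℝ)+1)) + g 0
        ≤ ((n:ℝ)+1) * ∑ k ∈ range n, g ((k:ℝ)/(n:ℝ)) + g (1/2)) ∧
      (((n:ℝ)+1) * ∑ k ∈ range n, g ((k:ℝ)/(n:ℝ)) + g 1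
        ≤ (n:ℝ) * ∑ k ∈ range (n+1), g ((k:ℝ)/((n:ℝ)+1)) + g (1/2)) := by
    intro n hn
    set N := n*(n+1) with hNdef
    have hN1 : 1 ≤ N := Nat.mul_pos (by omega) (by omega)
    have hN0 : ((N:ℕ):ℝ) ≠ 0 := by positivity
    have hNpos : (0:ℝ) < ((N:ℕ):ℝ) := by positivity
    set G : ℕ → ℝ := fun j => g ((j:ℝ)/((N:ℕ):ℝ)) with hGdef
    have hmem : ∀ j : ℕ, j ≤ N → ((j:ℝ)/((N:ℕ):ℝ)) ∈ Set.Icc (0:ℝ) 1 := by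
      intro j hj
      constructor
      · positivity
      · rw [div_le_one hNpos]
        exact_mod_cast hj
    have hconc : ∀ j, j + 2 ≤ N → G (j+2) - G (j+1) ≤ G (j+1) - G j := by
      intro j hj
      have hx := hmem j (by omega)
      have hy := hmem (j+2) (by omega)
      have hmid := hg.2 hx hy (by norm_num : (0:ℝ) ≤ 1/2) (by norm_num : (0:ℝ) ≤ 1/2)
        (by norm_num)
      have harg : (1/2 : ℝ) • ((j:ℝ)/((N:ℕ):ℝ)) + (1/2 : ℝ) • ((((j+2:ℕ)):ℝ)/((N:ℕ):ℝ))
          = ((j+1:ℕ):ℝ)/((N:ℕ):ℝ) := by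
        push_cast
        simp only [smul_eq_mul]
        ring
      rw [harg] at hmid
      simp only [smul_eq_mul] at hmid
      simp only [hGdef]
      push_cast at hmid ⊢
      linarith
    have hc1 := C1 n hn G hconc
    have hc2 := C2 n hn G hconc
    -- evaluate grid points
    have hG1 : ∀ k ∈ range (n+1), G (k*n) = g ((k:ℝ)/((n:ℝ)+1)) := by
      intro k hk
      simp only [hGdef]
      congr 1
      rw [div_eq_div_iff hN0 (by positivity : ((n:ℝ)+1) ≠ 0)]
      simp only [hNdef]
      push_cast
      ring
    have hG2 : ∀ k ∈ range n, G (k*(n+1)) = g ((k:ℝ)/(n:ℝ)) := by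
      intro k hk
      simp only [hGdef]
      congr 1
      rw [div_eq_div_iff hN0 (by positivity : ((n:ℝ)) ≠ 0)]
      simp only [hNdef]
      push_cast
      ring
    have hG0 : G 0 = g 0 := by
      simp only [hGdef]
      norm_num
    have hGN : G N = g 1 := by
      simp only [hGdef]
      rw [div_self hN0]
    have hGH : G (N/2) = g (1/2) := by
      simp only [hGdef]
      congr 1
      have h2 : (N/2)*2 = N := by
        obtain ⟨c, hc⟩ := Nat.even_mul_succ_self n
        omega
      rw [div_eq_div_iff hN0 (by norm_num : (2:ℝ) ≠ 0)]
      rw [one_mul]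
      exact_mod_cast congrArg (Nat.cast : ℕ → ℝ) h2
    rw [Finset.sum_congr rfl hG1, Finset.sum_congr rfl hG2, hG0, hGH] at hc1
    rw [Finset.sum_congr rfl hG1, Finset.sum_congr rfl hG2, hGN, hGH] at hc2
    exact ⟨hc1, hc2⟩
  -- values of g
  have hg0 : g 0 = (f 0 + f 1)/2 := by
    simp only [hgdef, symmetrization]
    norm_num
  have hg1 : g 1 = (f 1 + f 0)/2 := by
    simp only [hgdef, symmetrization]
    norm_num
  have hgh : g (1/2) = f (1/2) := by
    simp only [hgdef, symmetrization]
    norm_num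
  constructor
  · intro n hn
    obtain ⟨hc1, -⟩ := main n hn
    have hn0 : (0:ℝ) < (n:ℝ) := by positivity
    have hn10 : (0:ℝ) < (n:ℝ)+1 := by positivity
    have hs1 := symm_sum f n hn
    have hs2 := symm_sum f (n+1) (by omega)
    push_cast at hs2
    rw [hs1, hs2, hg0, hgh] at hc1
    simp only [riemannL]
    push_cast
    rw [show (1/((n:ℝ)+1)) * ∑ k ∈ range (n+1), f ((k:ℝ)/((n:ℝ)+1))
        = (∑ k ∈ range (n+1), f ((k:ℝ)/((n:ℝ)+1))) / ((n:ℝ)+1) by ring,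
      show (1/(n:ℝ)) * ∑ k ∈ range n, f ((k:ℝ)/(n:ℝ))
        = (∑ k ∈ range n, f ((k:ℝ)/(n:ℝ))) / (n:ℝ) by ring,
      div_le_div_iff₀ hn10 hn0]
    nlinarith [hc1, h0]
  · intro n hn
    obtain ⟨-, hc2⟩ := main n hn
    have hn0 : (0:ℝ) < (n:ℝ) := by positivity
    have hn10 : (0:ℝ) < (n:ℝ)+1 := by positivity
    have hs1 := symm_sum f n hn
    have hs2 := symm_sum f (n+1) (by omega)
    push_cast at hs2
    rw [hs1, hs2, hg1, hgh] at hc2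
    simp only [riemannR]
    rw [iccS f n hn, iccS f (n+1) (by omega)]
    push_cast
    rw [show (1/(n:ℝ)) * (∑ k ∈ range n, f ((k:ℝ)/(n:ℝ)) - f 0 + f 1)
        = (∑ k ∈ range n, f ((k:ℝ)/(n:ℝ)) - f 0 + f 1) / (n:ℝ) by ring,
      show (1/((n:ℝ)+1)) * (∑ k ∈ range (n+1), f ((k:ℝ)/((n:ℝ)+1)) - f 0 + f 1)
        = (∑ k ∈ range (n+1), f ((k:ℝ)/((n:ℝ)+1)) - f 0 + f 1) / ((n:ℝ)+1) by ring,
      div_le_div_iff₀ hn0 hn10]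
    nlinarith [hc2, h0]

lemma riemannL_neg (f : ℝ → ℝ) (n : ℕ) : riemannL (fun x => -f x) n = -riemannL f n := by
  simp only [riemannL, Finset.sum_neg_distrib, mul_neg]

lemma riemannR_neg (f : ℝ → ℝ) (n : ℕ) : riemannR (fun x => -f x) n = -riemannR f n := by
  simp only [riemannR, Finset.sum_neg_distrib, mul_neg]

lemma symm_neg (f : ℝ → ℝ) :
    symmetrization (fun x => -f x) = fun x => -(symmetrization f x) := by
  funext x
  simp only [symmetrization]
  ring

lemma symm_sigma (f : ℝ → ℝ) :
    symmetrization (fun x => f (1 - x)) = symmetrization f := by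
  funext x
  simp only [symmetrization, sub_sub_cancel]
  ring

lemma riemannL_sigma (f : ℝ → ℝ) (n : ℕ) (hn : 1 ≤ n) :
    riemannL (fun x => f (1 - x)) n = riemannR f n := by
  simp only [riemannL, riemannR]
  rw [iccS f n hn, reflS f n hn]

lemma riemannR_sigma (f : ℝ → ℝ) (n : ℕ) (hn : 1 ≤ n) :
    riemannR (fun x => f (1 - x)) n = riemannL f n := by
  simp only [riemannR, riemannL]
  rw [iccS (fun x => f (1-x)) n hn, reflS f n hn]
  norm_num

lemma case2 (f : ℝ → ℝ) (hg : ConcaveOn ℝ (Set.Icc (0:ℝ) 1) (symmetrization f))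
    (h1 : f (1/2) ≤ f 1) :
    (∀ n : ℕ, 1 ≤ n → riemannL f n ≤ riemannL f (n + 1)) ∧
    (∀ n : ℕ, 1 ≤ n → riemannR f (n + 1) ≤ riemannR f n) := by
  have hg' : ConcaveOn ℝ (Set.Icc (0:ℝ) 1) (symmetrization (fun x => f (1 - x))) := by
    rw [symm_sigma]; exact hg
  have h0' : (fun x => f (1 - x)) (1/2) ≤ (fun x => f (1 - x)) 0 := by
    norm_num
    exact h1
  obtain ⟨hL, hR⟩ := case1 (fun x => f (1 - x)) hg' h0'
  constructor
  · intro n hn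
    have := hR n hn
    rwa [riemannR_sigma f n hn, riemannR_sigma f (n+1) (by omega)] at this
  · intro n hn
    have := hL n hn
    rwa [riemannL_sigma f n hn, riemannL_sigma f (n+1) (by omega)] at this

theorem stmt8 (f : ℝ → ℝ) :
    ((ConcaveOn ℝ (Set.Icc (0:ℝ) 1) (symmetrization f) ∧ f (1 / 2) ≤ f 0) →
      (∀ n : ℕ, 1 ≤ n → riemannL f (n + 1) ≤ riemannL f n) ∧
      (∀ n : ℕ, 1 ≤ n → riemannR f n ≤ riemannR f (n + 1))) ∧
    ((ConcaveOn ℝ (Set.Icc (0:ℝ) 1) (symmetrization f) ∧ f (1 / 2) ≤ f 1) →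
      (∀ n : ℕ, 1 ≤ n → riemannL f n ≤ riemannL f (n + 1)) ∧
      (∀ n : ℕ, 1 ≤ n → riemannR f (n + 1) ≤ riemannR f n)) ∧
    ((ConvexOn ℝ (Set.Icc (0:ℝ) 1) (symmetrization f) ∧ f 1 ≤ f (1 / 2)) →
      (∀ n : ℕ, 1 ≤ n → riemannL f (n + 1) ≤ riemannL f n) ∧
      (∀ n : ℕ, 1 ≤ n → riemannR f n ≤ riemannR f (n + 1))) ∧
    ((ConvexOn ℝ (Set.Icc (0:ℝ) 1) (symmetrization f) ∧ f 0 ≤ f (1 / 2)) →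
      (∀ n : ℕ, 1 ≤ n → riemannL f n ≤ riemannL f (n + 1)) ∧
      (∀ n : ℕ, 1 ≤ n → riemannR f (n + 1) ≤ riemannR f n)) := by
  have hnegconc : ∀ (h : ConvexOn ℝ (Set.Icc (0:ℝ) 1) (symmetrization f)),
      ConcaveOn ℝ (Set.Icc (0:ℝ) 1) (symmetrization (fun x => -f x)) := by
    intro h
    rw [symm_neg]
    exact h.neg
  refine ⟨fun ⟨hg, h0⟩ => case1 f hg h0, fun ⟨hg, h1⟩ => case2 f hg h1, ?_, ?_⟩
  · rintro ⟨hg, h1⟩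
    obtain ⟨hL, hR⟩ := case2 (fun x => -f x) (hnegconc hg) (by simpa using h1)
    constructor
    · intro n hn
      have := hL n hn
      rw [riemannL_neg, riemannL_neg] at this
      linarith
    · intro n hn
      have := hR n hn
      rw [riemannR_neg, riemannR_neg] at this
      linarith
  · rintro ⟨hg, h0⟩
    obtain ⟨hL, hR⟩ := case1 (fun x => -f x) (hnegconc hg) (by simpa using h0)
    constructor
    · intro n hn
      have := hL n hn
      rw [riemannL_neg, riemannL_neg] at this
      linarith
    · intro n hn
      have := hR n hn
      rw [riemannR_neg, riemannR_neg] at this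
      linarith
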